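/- Let P₁,…,P_N be linearly independent polynomials on ℝ^n, let G ⊆ ℝ^n be a bounded open set, and let c > 0. Then inf over pairs (u, Ω), with u ∈ ℝ^N a unit vector and Ω ⊆ G measurable with vol(Ω) ≥ c, of ∫_Ω (Σ_k u_k P_k(x))² dx is strictly positive. -/

import Mathlib

open MeasureTheory

lemma mvpoly_zero_locus_null :
    ∀ (n : ℕ) (p : MvPolynomial (Fin n) ℝ), p ≠ 0 →
      volume {x : Fin n → ℝ | MvPolynomial.eval x p = 0} = 0 := by
  intro n
  induction n with
  | zero =>
      intro p hp
      convert measure_empty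
      · ext x
        simp only [Set.mem_setOf_eq, Set.mem_empty_iff_false, iff_false]
        intro h
        apply hp
        apply (MvPolynomial.isEmptyAlgEquiv ℝ (Fin 0)).injective
        rw [map_zero, MvPolynomial.isEmptyAlgEquiv_apply, ← h]
        have hx : x = IsEmpty.elim (by infer_instance) := funext fun i => i.elim0
        conv_rhs => rw [MvPolynomial.eq_C_of_isEmpty p]
        rw [MvPolynomial.eval_C]
        rfl
      · infer_instance
  | succ n IH =>
      intro p hp
      set q : Polynomial (MvPolynomial (Fin n) ℝ) := MvPolynomial.finSuccEquiv ℝ n p with hq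
      have hq0 : q ≠ 0 := by
        simp only [hq, ne_eq, map_eq_zero_iff _ (MvPolynomial.finSuccEquiv ℝ n).injective]
        exact hp
      -- measure-preserving map to (Fin n → ℝ) × ℝ
      have e1 := MeasureTheory.volume_preserving_piFinSuccAbove (fun _ : Fin (n+1) => ℝ) 0
      have e2 := MeasureTheory.Measure.measurePreserving_swap (μ := (volume : Measure ℝ))
        (ν := (volume : Measure (Fin n → ℝ)))
      set T : Set ((Fin n → ℝ) × ℝ) :=
        {sy | Polynomial.eval sy.2 (Polynomial.map (MvPolynomial.eval sy.1) q) = 0} with hT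
      have hcont : Continuous fun sy : (Fin n → ℝ) × ℝ =>
          Polynomial.eval sy.2 (Polynomial.map (MvPolynomial.eval sy.1) q) := by
        have : ∀ sy : (Fin n → ℝ) × ℝ,
            Polynomial.eval sy.2 (Polynomial.map (MvPolynomial.eval sy.1) q) =
              ∑ i ∈ Finset.range (q.natDegree + 1),
                MvPolynomial.eval sy.1 (q.coeff i) * sy.2 ^ i := by
          intro sy
          rw [Polynomial.eval_eq_sum_range'
            (Nat.lt_succ_of_le Polynomial.natDegree_map_le)]
          simp [Polynomial.coeff_map]
        simp only [funext this]
        exact continuous_finset_sum _ fun i _ =>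
          ((MvPolynomial.continuous_eval _).comp continuous_fst).mul
            ((continuous_snd.pow i))
      have hTm : MeasurableSet T := hcont.measurable (measurableSet_singleton 0)
      have hTnull : (volume : Measure ((Fin n → ℝ) × ℝ)) T = 0 := by
        rw [show (volume : Measure ((Fin n → ℝ) × ℝ)) =
          (volume : Measure (Fin n → ℝ)).prod (volume : Measure ℝ) from rfl]
        rw [MeasureTheory.Measure.measure_prod_null hTm]
        have hZ : volume {s : Fin n → ℝ |
            MvPolynomial.eval s (q.coeff q.natDegree) = 0} = 0 :=
          IH _ (Polynomial.leadingCoeff_ne_zero.mpr hq0)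
        filter_upwards [measure_eq_zero_iff_ae_notMem.mp hZ] with s hs
        have hmap : Polynomial.map (MvPolynomial.eval s) q ≠ 0 := by
          intro h0
          apply hs
          have := congrArg (fun r => Polynomial.coeff r q.natDegree) h0
          simpa [Polynomial.coeff_map] using this
        have hfin : {y : ℝ | Polynomial.IsRoot (Polynomial.map (MvPolynomial.eval s) q) y}.Finite :=
          Polynomial.finite_setOf_isRoot hmap
        refine measure_mono_null ?_ (hfin.measure_zero _)
        intro y hy
        exact hy
      -- transfer
      have key : {x : Fin (n+1) → ℝ | MvPolynomial.eval x p = 0} =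
          (Prod.swap ∘ (MeasurableEquiv.piFinSuccAbove (fun _ : Fin (n+1) => ℝ) 0)) ⁻¹' T := by
        ext x
        simp only [Set.mem_setOf_eq, Set.mem_preimage, Function.comp_apply, hT, Prod.swap]
        have hx : (MeasurableEquiv.piFinSuccAbove (fun _ : Fin (n+1) => ℝ) 0) x =
            (x 0, fun j => x ((0 : Fin (n+1)).succAbove j)) := rfl
        rw [hx]
        have hx2 : (fun j : Fin n => x ((0 : Fin (n+1)).succAbove j)) = Fin.tail x := by
          funext j; simp [Fin.tail, Fin.succAbove]
        have := MvPolynomial.eval_eq_eval_mv_eval' (Fin.tail x) (x 0) p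
        rw [Fin.cons_self_tail] at this
        rw [this, hx2]
      rw [key]
      have hmp : MeasurePreserving
          (Prod.swap ∘ (MeasurableEquiv.piFinSuccAbove (fun _ : Fin (n+1) => ℝ) 0))
          (volume : Measure (Fin (n+1) → ℝ)) (volume : Measure ((Fin n → ℝ) × ℝ)) :=
        e2.comp e1
      rw [hmp.measure_preimage hTm.nullMeasurableSet]
      exact hTnull

open MeasureTheory

/-- For linearly independent polynomials `P₁,…,P_N` on `ℝ^n`, a bounded open
set `G ⊆ ℝ^n` and `c > 0`, the infimum over unit vectors `u ∈ ℝ^N` and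
measurable `Ω ⊆ G` with `vol Ω ≥ c` of `∫_Ω (Σ u_k P_k)² dx` is strictly
positive. -/
theorem inf_integral_sq_linear_combination_pos
    (n N : ℕ) (P : Fin N → MvPolynomial (Fin n) ℝ)
    (hP : LinearIndependent ℝ P)
    (G : Set (Fin n → ℝ)) (hGopen : IsOpen G)
    (hGbdd : Bornology.IsBounded G)
    (c : ℝ) (hc : 0 < c) :
    ∃ ε > 0, ∀ (u : Fin N → ℝ), (∑ k, (u k) ^ 2 = 1) →
      ∀ (Ω : Set (Fin n → ℝ)), Ω ⊆ G → MeasurableSet Ω →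
        ENNReal.ofReal c ≤ volume Ω →
        ε ≤ ∫ x in Ω, (∑ k, u k * MvPolynomial.eval x (P k)) ^ 2 := by
  classical
  set f : (Fin N → ℝ) → (Fin n → ℝ) → ℝ :=
    fun u x => ∑ k, u k * MvPolynomial.eval x (P k) with hfdef
  have hGfin : volume G < ⊤ := hGbdd.measure_lt_top
  have hKcomp : IsCompact (closure G) := hGbdd.isCompact_closure
  have hfc : ∀ u, Continuous (f u) := fun u =>
    continuous_finset_sum _ fun k _ => continuous_const.mul (MvPolynomial.continuous_eval _)
  -- uniform bound on P k over closure of G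
  have hMk : ∀ k : Fin N, ∃ C : ℝ, ∀ x ∈ closure G, |MvPolynomial.eval x (P k)| ≤ C := by
    intro k
    obtain ⟨C, hC⟩ := hKcomp.exists_bound_of_continuousOn
      (MvPolynomial.continuous_eval (P k)).continuousOn
    exact ⟨C, fun x hx => by simpa [Real.norm_eq_abs] using hC x hx⟩
  choose C hC using hMk
  set M : ℝ := 1 + ∑ k, max (C k) 0 with hM
  have hM1 : 1 ≤ M := le_add_of_nonneg_right (Finset.sum_nonneg fun k _ => le_max_right _ _)
  have hM0 : 0 < M := lt_of_lt_of_le one_pos hM1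
  -- Lipschitz-type estimate
  have hlip : ∀ u v : Fin N → ℝ, ∀ x ∈ G, |f u x - f v x| ≤ dist u v * M := by
    intro u v x hx
    have hx' : x ∈ closure G := subset_closure hx
    have hdiff : f u x - f v x = ∑ k, (u k - v k) * MvPolynomial.eval x (P k) := by
      simp [hfdef, ← Finset.sum_sub_distrib, sub_mul]
    rw [hdiff]
    calc |∑ k, (u k - v k) * MvPolynomial.eval x (P k)|
        ≤ ∑ k, |(u k - v k) * MvPolynomial.eval x (P k)| := Finset.abs_sum_le_sum_abs _ _
      _ ≤ ∑ k, dist u v * max (C k) 0 := by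
          refine Finset.sum_le_sum fun k _ => ?_
          rw [abs_mul]
          refine mul_le_mul ?_ (le_trans (hC k x hx') (le_max_left _ _)) (abs_nonneg _)
            dist_nonneg
          rw [← Real.dist_eq]
          exact dist_le_pi_dist u v k
      _ = dist u v * ∑ k, max (C k) 0 := by rw [← Finset.mul_sum]
      _ ≤ dist u v * M := by
          refine mul_le_mul_of_nonneg_left ?_ dist_nonneg
          rw [hM]; linarith
  -- nonvanishing polynomials on the sphere
  have hQ : ∀ u : Fin N → ℝ, (∑ k, u k ^ 2 = 1) → (∑ k, u k • P k) ≠ 0 := by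
    intro u hu h0
    have hz := Fintype.linearIndependent_iff.mp hP u h0
    simp [hz] at hu
  have heval : ∀ (u : Fin N → ℝ) (x : Fin n → ℝ),
      MvPolynomial.eval x (∑ k, u k • P k) = f u x := by
    intro u x
    simp [hfdef, MvPolynomial.smul_eval]
  -- the threshold function t
  have hT : ∀ u : Fin N → ℝ, ∃ t : ℝ, 0 < t ∧ ((∑ k, u k ^ 2 = 1) →
      volume (G ∩ {x | |f u x| < t}) < ENNReal.ofReal (c / 2)) := by
    intro u
    by_cases hu : ∑ k, u k ^ 2 = 1
    · set A : ℕ → Set (Fin n → ℝ) :=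
        fun m => G ∩ {x | |f u x| < 1 / (m + 1)} with hA
      have hAm : ∀ m, MeasurableSet (A m) := by
        intro m
        exact (hGopen.inter (isOpen_lt (hfc u).abs continuous_const)).measurableSet
      have hanti : Antitone A := by
        intro a b hab x hx
        have h2 : |f u x| < 1 / ((b : ℝ) + 1) := hx.2
        refine ⟨hx.1, show |f u x| < 1 / ((a : ℝ) + 1) from lt_of_lt_of_le h2 ?_⟩
        apply one_div_le_one_div_of_le (by positivity)
        have := (Nat.cast_le (α := ℝ)).mpr hab
        linarith
      have hfin : volume (A 0) ≠ ⊤ :=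
        ((measure_mono Set.inter_subset_left).trans_lt hGfin).ne
      have hnull : volume (⋂ m, A m) = 0 := by
        refine measure_mono_null ?_ (mvpoly_zero_locus_null n _ (hQ u hu))
        intro x hx
        rw [Set.mem_setOf_eq, heval]
        by_contra h0
        have habs : 0 < |f u x| := abs_pos.mpr h0
        obtain ⟨m, hm⟩ := exists_nat_one_div_lt habs
        exact absurd ((Set.mem_iInter.mp hx m).2) (not_lt.mpr hm.le)
      have htend := tendsto_measure_iInter_atTop
        (fun m => (hAm m).nullMeasurableSet) hanti ⟨0, hfin⟩
      rw [hnull] at htend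
      have hpos : (0 : ENNReal) < ENNReal.ofReal (c / 2) :=
        ENNReal.ofReal_pos.mpr (by linarith)
      obtain ⟨m, hm⟩ := (htend.eventually (gt_mem_nhds hpos)).exists
      exact ⟨1 / (m + 1), by positivity, fun _ => hm⟩
    · exact ⟨1, one_pos, fun h => absurd h hu⟩
  choose t ht hvol using hT
  -- the sphere is compact
  set S : Set (Fin N → ℝ) := {u | ∑ k, u k ^ 2 = 1} with hSdef
  have hScl : IsClosed S :=
    isClosed_eq (continuous_finset_sum _ fun k _ => (continuous_apply k).pow 2)
      continuous_const
  have hSbdd : Bornology.IsBounded S := by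
    rw [isBounded_iff_forall_norm_le]
    refine ⟨1, fun u hu => ?_⟩
    rw [pi_norm_le_iff_of_nonneg zero_le_one]
    intro k
    rw [Real.norm_eq_abs, ← sq_le_one_iff_abs_le_one]
    have : (u k) ^ 2 ≤ ∑ j, (u j) ^ 2 :=
      Finset.single_le_sum (fun j _ => sq_nonneg (u j)) (Finset.mem_univ k)
    rw [hu] at this
    exact this
  have hScomp : IsCompact S := Metric.isCompact_of_isClosed_isBounded hScl hSbdd
  -- finite subcover
  have hcover : S ⊆ ⋃ u ∈ S, Metric.ball u (t u / (2 * M)) := fun u hu =>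
    Set.mem_biUnion hu (Metric.mem_ball_self (by have := ht u; positivity))
  obtain ⟨b', hb'S, hb'fin, hb'cov⟩ := hScomp.elim_finite_subcover_image
    (fun u _ => Metric.isOpen_ball) hcover
  set F : Finset (Fin N → ℝ) := hb'fin.toFinset with hFdef
  by_cases hF : F.Nonempty
  · refine ⟨F.inf' hF fun v => (t v / 2) ^ 2 * (c / 2), ?_, ?_⟩
    · refine (Finset.lt_inf'_iff hF).mpr fun v _ => ?_
      have := ht v
      positivity
    · intro u hu Ω hΩG hΩm hΩc
      have huS : u ∈ S := hu
      obtain ⟨u₀, hu₀b', hu₀ball⟩ := Set.mem_iUnion₂.mp (hb'cov huS)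
      have hu₀F : u₀ ∈ F := hb'fin.mem_toFinset.mpr hu₀b'
      have hu₀S : u₀ ∈ S := hb'S hu₀b'
      have hAvol : volume (G ∩ {x | |f u₀ x| < t u₀}) < ENNReal.ofReal (c / 2) :=
        hvol u₀ hu₀S
      set A : Set (Fin n → ℝ) := G ∩ {x | |f u₀ x| < t u₀} with hAdef
      have hAmeas : MeasurableSet A :=
        (hGopen.inter (isOpen_lt (hfc u₀).abs continuous_const)).measurableSet
      set B : Set (Fin n → ℝ) := Ω \ A with hBdef
      have hBm : MeasurableSet B := hΩm.diff hAmeas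
      have hBΩ : B ⊆ Ω := Set.diff_subset
      have hBG : B ⊆ G := hBΩ.trans hΩG
      have hBfin : volume B ≠ ⊤ := ((measure_mono hBG).trans_lt hGfin).ne
      have hBvol : ENNReal.ofReal (c / 2) ≤ volume B := by
        have h1 : volume Ω ≤ volume B + volume A := by
          refine le_trans (measure_mono ?_) (measure_union_le B A)
          intro x hx
          by_cases hxA : x ∈ A
          · exact Or.inr hxA
          · exact Or.inl ⟨hx, hxA⟩
        have h2 : ENNReal.ofReal (c / 2) + ENNReal.ofReal (c / 2) = ENNReal.ofReal c := by
          rw [← ENNReal.ofReal_add (by linarith) (by linarith)]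
          norm_num
        have h3 : ENNReal.ofReal (c / 2) + ENNReal.ofReal (c / 2) ≤
            volume B + ENNReal.ofReal (c / 2) := by
          rw [h2]
          exact le_trans hΩc (h1.trans (add_le_add_right hAvol.le _))
        exact (ENNReal.add_le_add_iff_right ENNReal.ofReal_ne_top).mp h3
      have hBtoReal : c / 2 ≤ (volume B).toReal := by
        have := ENNReal.toReal_mono hBfin hBvol
        rwa [ENNReal.toReal_ofReal (by linarith)] at this
      -- pointwise lower bound on B
      have hpt : ∀ x ∈ B, (t u₀ / 2) ^ 2 ≤ (f u x) ^ 2 := by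
        intro x hx
        have hxG : x ∈ G := hBG hx
        have h1 : t u₀ ≤ |f u₀ x| := by
          by_contra h
          exact hx.2 ⟨hxG, not_le.mp h⟩
        have h2 : |f u x - f u₀ x| ≤ dist u u₀ * M := hlip u u₀ x hxG
        have hd : dist u u₀ < t u₀ / (2 * M) := Metric.mem_ball.mp hu₀ball
        have h3 : dist u u₀ * M ≤ t u₀ / 2 := by
          calc dist u u₀ * M ≤ (t u₀ / (2 * M)) * M :=
                mul_le_mul_of_nonneg_right hd.le hM0.le
            _ = t u₀ / 2 := by field_simp
        have h4 : t u₀ / 2 ≤ |f u x| := by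
          have h5 := abs_sub_abs_le_abs_sub (f u₀ x) (f u x)
          rw [abs_sub_comm] at h5
          have h6 : |f u₀ x| - |f u x| ≤ t u₀ / 2 := le_trans (le_trans h5 h2) h3
          linarith
        calc (t u₀ / 2) ^ 2 ≤ |f u x| ^ 2 := by
              have h0 : (0:ℝ) ≤ t u₀ / 2 := by have := ht u₀; positivity
              exact pow_le_pow_left₀ h0 h4 2
          _ = (f u x) ^ 2 := sq_abs _
      -- integrability
      have hi : IntegrableOn (fun x => (f u x) ^ 2) Ω volume := by
        have : IntegrableOn (fun x => (f u x) ^ 2) (closure G) volume :=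
          (((hfc u).pow 2).continuousOn).integrableOn_compact hKcomp
        exact this.mono_set (hΩG.trans subset_closure)
      calc (F.inf' hF fun v => (t v / 2) ^ 2 * (c / 2))
          ≤ (t u₀ / 2) ^ 2 * (c / 2) := Finset.inf'_le _ hu₀F
        _ ≤ (t u₀ / 2) ^ 2 * (volume B).toReal :=
            mul_le_mul_of_nonneg_left hBtoReal (by positivity)
        _ ≤ ∫ x in B, (f u x) ^ 2 :=
            by have := setIntegral_ge_of_const_le_real hBm hBfin hpt (hi.mono_set hBΩ)
               rwa [measureReal_def] at this
        _ ≤ ∫ x in Ω, (f u x) ^ 2 :=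
            setIntegral_mono_set hi
              (Filter.Eventually.of_forall fun x => sq_nonneg _)
              (HasSubset.Subset.eventuallyLE hBΩ)
  · refine ⟨1, one_pos, fun u hu => absurd (hb'cov hu) ?_⟩
    have : b' = ∅ := by
      rw [Finset.not_nonempty_iff_eq_empty, hFdef, Set.Finite.toFinset_eq_empty] at hF
      exact hF
    simp [this]
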